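/- For n ∉ {3,5,7}, n ≥ 3, we have Sp(W,n) ≥ Σ_{i=0}^{⌊n/3⌋−1} Σ_{j=0}^{i} 3^j · C(i,j) · C(n−3i−3, ⌊(n−1)/2⌋+j−3i), where Sp(W,n) is the maximum number of pairwise unrelated copies of the poset W in P([n]) and binomial coefficients with out-of-range lower index are 0. -/

import Mathlib

/-- The 4-element poset `W`: a bottom element (`none`) below three pairwise
incomparable maximal elements (`some 0`, `some 1`, `some 2`). -/
def WPoset : Type := Option (Fin 3)

instance : PartialOrder WPoset where
  le x y := x = none ∨ x = y
  le_refl x := Or.inr rfl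
  le_trans x y z h₁ h₂ := by
    rcases h₁ with h | h
    · exact Or.inl h
    · subst h; exact h₂
  le_antisymm x y h₁ h₂ := by
    rcases h₁ with h | h
    · rcases h₂ with g | g
      · exact h.trans g.symm
      · exact g.symm
    · exact h

namespace Sp18

/-- Case analysis for elements of `WPoset`. -/
lemma wcases (w : WPoset) : w = (none : Option (Fin 3)) ∨ ∃ t : Fin 3, w = some t :=
  match w with
  | none => Or.inl rfl
  | some t => Or.inr ⟨t, rfl⟩

lemma wle_iff (w w' : WPoset) : w ≤ w' ↔ (w = (none : Option (Fin 3)) ∨ w = w') := Iff.rfl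

/-- Data choosing, for each member of a set `S ⊆ Fin i`, one of three elements. -/
abbrev QT (i : ℕ) := Σ S : Finset (Fin i), ∀ a ∈ S, Fin 3

/-- All choices with `|S| = j`. -/
def P (i j : ℕ) : Finset (QT i) :=
  (Finset.powersetCard j (Finset.univ : Finset (Fin i))).sigma
    (fun S => S.pi fun _ => (Finset.univ : Finset (Fin 3)))

lemma card_P (i j : ℕ) : (P i j).card = i.choose j * 3 ^ j := by
  rw [P, Finset.card_sigma]
  have h : ∀ S ∈ Finset.powersetCard j (Finset.univ : Finset (Fin i)),
      (S.pi fun _ => (Finset.univ : Finset (Fin 3))).card = 3 ^ j := by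
    intro S hS
    rw [Finset.card_pi, Finset.prod_const, Finset.card_univ, Fintype.card_fin,
      (Finset.mem_powersetCard.mp hS).2]
  rw [Finset.sum_congr rfl h, Finset.sum_const, smul_eq_mul,
    Finset.card_powersetCard, Finset.card_univ, Fintype.card_fin]

/-- The set of "removed" elements determined by a choice `q`. -/
def brem {i : ℕ} (q : QT i) : Finset ℕ :=
  q.1.attach.image fun l => 3 * (l.1 : ℕ) + (q.2 l.1 l.2 : ℕ)

lemma brem_lt {i : ℕ} (q : QT i) : ∀ x ∈ brem q, x < 3 * i := by
  intro x hx
  simp only [brem, Finset.mem_image, Finset.mem_attach, true_and] at hx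
  obtain ⟨l, rfl⟩ := hx
  have h1 := l.1.2
  have h2 := (q.2 l.1 l.2).2
  omega

lemma card_brem {i : ℕ} (q : QT i) : (brem q).card = q.1.card := by
  rw [brem, Finset.card_image_of_injOn, Finset.card_attach]
  intro a _ b _ hab
  dsimp only at hab
  have h2a := (q.2 a.1 a.2).2
  have h2b := (q.2 b.1 b.2).2
  have hval : (a.1 : ℕ) = (b.1 : ℕ) := by omega
  exact Subtype.ext (Fin.ext hval)

lemma brem_block {i : ℕ} (q : QT i) (l : ℕ) :
    ((brem q) ∩ Finset.Ico (3 * l) (3 * l + 3)).card ≤ 1 := by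
  apply Finset.card_le_one.mpr
  intro a ha b hb
  rw [Finset.mem_inter, Finset.mem_Ico] at ha hb
  obtain ⟨ha1, ha2, ha3⟩ := ha
  obtain ⟨hb1, hb2, hb3⟩ := hb
  simp only [brem, Finset.mem_image, Finset.mem_attach, true_and] at ha1 hb1
  obtain ⟨la, rfl⟩ := ha1
  obtain ⟨lb, rfl⟩ := hb1
  have hca := (q.2 la.1 la.2).2
  have hcb := (q.2 lb.1 lb.2).2
  have hval : (la.1 : ℕ) = (lb.1 : ℕ) := by omega
  have : la = lb := Subtype.ext (Fin.ext hval)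
  subst this
  rfl

lemma mem_S_iff {i : ℕ} (q : QT i) (l : Fin i) :
    l ∈ q.1 ↔ ∃ x ∈ brem q, 3 * (l : ℕ) ≤ x ∧ x < 3 * (l : ℕ) + 3 := by
  constructor
  · intro hl
    refine ⟨3 * (l : ℕ) + (q.2 l hl : ℕ), ?_, ?_⟩
    · exact Finset.mem_image.mpr ⟨⟨l, hl⟩, Finset.mem_attach _ _, rfl⟩
    · have := (q.2 l hl).2; omega
  · rintro ⟨x, hx, h1, h2⟩
    simp only [brem, Finset.mem_image, Finset.mem_attach, true_and] at hx
    obtain ⟨l', rfl⟩ := hx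
    have hc := (q.2 l'.1 l'.2).2
    have hval : (l'.1 : ℕ) = (l : ℕ) := by omega
    have : l'.1 = l := Fin.ext hval
    rw [← this]
    exact l'.2

/-- Index type of the family of copies. -/
abbrev Dom := Σ _i : ℕ, Σ _j : ℕ, QT _i × Finset ℕ

/-- The full parameter set. -/
def Idx (n : ℕ) : Finset Dom :=
  (Finset.range (n / 3)).sigma fun i =>
    (Finset.range (i + 1)).sigma fun j =>
      if 3 * i ≤ (n - 1) / 2 + j then
        (P i j) ×ˢ Finset.powersetCard ((n - 1) / 2 + j - 3 * i) (Finset.Ico (3 * i + 3) n)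
      else ∅

/-- The bottom set of the copy of `W` indexed by `p`. -/
def bot (p : Dom) : Finset ℕ :=
  p.2.2.2 ∪ (Finset.range (3 * p.1) \ brem p.2.2.1)

/-- The four sets of a copy: the bottom and the three tops. -/
def wst (i : ℕ) (A : Finset ℕ) (w : WPoset) : Finset ℕ :=
  Option.elim w A fun t => insert (3 * i + (t : ℕ)) A

lemma card_Idx (n : ℕ) :
    (Idx n).card = ∑ i ∈ Finset.range (n / 3), ∑ j ∈ Finset.range (i + 1),
      if 3 * i ≤ (n - 1) / 2 + j then
        3 ^ j * i.choose j * (n - 3 * i - 3).choose ((n - 1) / 2 + j - 3 * i)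
      else 0 := by
  rw [Idx, Finset.card_sigma]
  refine Finset.sum_congr rfl fun i _ => ?_
  rw [Finset.card_sigma]
  refine Finset.sum_congr rfl fun j _ => ?_
  split_ifs with h
  · rw [Finset.card_product, card_P, Finset.card_powersetCard, Nat.card_Ico]
    have : n - (3 * i + 3) = n - 3 * i - 3 := by omega
    rw [this]; ring
  · simp

lemma mem_Idx_elim {n : ℕ} {p : Dom} (hp : p ∈ Idx n) :
    p.1 < n / 3 ∧ p.2.1 ≤ p.1 ∧ 3 * p.1 ≤ (n - 1) / 2 + p.2.1 ∧
    p.2.2.1.1.card = p.2.1 ∧ p.2.2.2.card = (n - 1) / 2 + p.2.1 - 3 * p.1 ∧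
    p.2.2.2 ⊆ Finset.Ico (3 * p.1 + 3) n := by
  obtain ⟨i, j, q, T⟩ := p
  simp only [Idx, Finset.mem_sigma, Finset.mem_range] at hp
  obtain ⟨hi, hj, hm⟩ := hp
  by_cases hg : 3 * i ≤ (n - 1) / 2 + j
  · rw [if_pos hg, Finset.mem_product] at hm
    obtain ⟨hq, hT⟩ := hm
    rw [Finset.mem_powersetCard] at hT
    have hcS : q.1.card = j := by
      rw [P, Finset.mem_sigma] at hq
      exact (Finset.mem_powersetCard.mp hq.1).2
    exact ⟨hi, Nat.lt_succ_iff.mp hj, hg, hcS, hT.2, hT.1⟩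
  · rw [if_neg hg] at hm
    simp at hm

lemma i_bound {n i : ℕ} (hi : i < n / 3) : 3 * i + 3 ≤ n := by
  have h := Nat.div_mul_le_self n 3
  omega

lemma bot_avoid {n : ℕ} {p : Dom} (hp : p ∈ Idx n) :
    ∀ x ∈ bot p, x < 3 * p.1 ∨ 3 * p.1 + 3 ≤ x := by
  obtain ⟨-, -, -, -, -, hTsub⟩ := mem_Idx_elim hp
  intro x hx
  rw [bot, Finset.mem_union] at hx
  rcases hx with hx | hx
  · exact Or.inr (Finset.mem_Ico.mp (hTsub hx)).1
  · exact Or.inl (Finset.mem_range.mp (Finset.mem_sdiff.mp hx).1)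

lemma bot_lt_n {n : ℕ} {p : Dom} (hp : p ∈ Idx n) : ∀ x ∈ bot p, x < n := by
  obtain ⟨hi, -, -, -, -, hTsub⟩ := mem_Idx_elim hp
  have h3 := i_bound hi
  intro x hx
  rw [bot, Finset.mem_union] at hx
  rcases hx with hx | hx
  · exact (Finset.mem_Ico.mp (hTsub hx)).2
  · have := Finset.mem_range.mp (Finset.mem_sdiff.mp hx).1
    omega

lemma bot_card {n : ℕ} {p : Dom} (hp : p ∈ Idx n) : (bot p).card = (n - 1) / 2 := by
  obtain ⟨hi, hj, hg, hS, hT, hTsub⟩ := mem_Idx_elim hp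
  have hdisj : Disjoint p.2.2.2 (Finset.range (3 * p.1) \ brem p.2.2.1) := by
    rw [Finset.disjoint_left]
    intro x hx hx'
    have h1 := (Finset.mem_Ico.mp (hTsub hx)).1
    have h2 := Finset.mem_range.mp (Finset.mem_sdiff.mp hx').1
    omega
  have hbsub : brem p.2.2.1 ⊆ Finset.range (3 * p.1) := fun x hx =>
    Finset.mem_range.mpr (brem_lt _ x hx)
  rw [bot, Finset.card_union_of_disjoint hdisj, Finset.card_sdiff_of_subset hbsub,
    Finset.card_range, card_brem, hS, hT]
  omega

lemma bot_block {n : ℕ} {p : Dom} (hp : p ∈ Idx n) :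
    ∀ l, l < p.1 → 2 ≤ ((bot p) ∩ Finset.Ico (3 * l) (3 * l + 3)).card := by
  intro l hl
  have hsub : Finset.Ico (3 * l) (3 * l + 3) \ brem p.2.2.1 ⊆
      (bot p) ∩ Finset.Ico (3 * l) (3 * l + 3) := by
    intro x hx
    rw [Finset.mem_sdiff, Finset.mem_Ico] at hx
    obtain ⟨⟨h1, h2⟩, h3⟩ := hx
    rw [Finset.mem_inter, Finset.mem_Ico, bot, Finset.mem_union]
    exact ⟨Or.inr (Finset.mem_sdiff.mpr ⟨Finset.mem_range.mpr (by omega), h3⟩), h1, h2⟩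
  refine le_trans ?_ (Finset.card_le_card hsub)
  have hEq : Finset.Ico (3 * l) (3 * l + 3) \ brem p.2.2.1 =
      Finset.Ico (3 * l) (3 * l + 3) \ (brem p.2.2.1 ∩ Finset.Ico (3 * l) (3 * l + 3)) := by
    ext x
    simp only [Finset.mem_sdiff, Finset.mem_inter]
    tauto
  rw [hEq, Finset.card_sdiff_of_subset Finset.inter_subset_right, Nat.card_Ico]
  have := brem_block p.2.2.1 l
  omega

lemma bot_filter_T {n : ℕ} {p : Dom} (hp : p ∈ Idx n) :
    (bot p).filter (fun x => 3 * p.1 + 3 ≤ x) = p.2.2.2 := by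
  obtain ⟨-, -, -, -, -, hTsub⟩ := mem_Idx_elim hp
  ext x
  rw [Finset.mem_filter, bot, Finset.mem_union]
  constructor
  · rintro ⟨hx | hx, hge⟩
    · exact hx
    · have := Finset.mem_range.mp (Finset.mem_sdiff.mp hx).1
      omega
  · intro hx
    exact ⟨Or.inl hx, (Finset.mem_Ico.mp (hTsub hx)).1⟩

lemma brem_iff {n : ℕ} {p : Dom} (hp : p ∈ Idx n) (x : ℕ) :
    x ∈ brem p.2.2.1 ↔ (x < 3 * p.1 ∧ x ∉ bot p) := by
  obtain ⟨-, -, -, -, -, hTsub⟩ := mem_Idx_elim hp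
  constructor
  · intro hx
    have hlt := brem_lt _ x hx
    refine ⟨hlt, ?_⟩
    rw [bot, Finset.mem_union]
    rintro (h | h)
    · have := (Finset.mem_Ico.mp (hTsub h)).1
      omega
    · exact (Finset.mem_sdiff.mp h).2 hx
  · rintro ⟨hlt, hnb⟩
    by_contra hx
    exact hnb (by
      rw [bot, Finset.mem_union]
      exact Or.inr (Finset.mem_sdiff.mpr ⟨Finset.mem_range.mpr hlt, hx⟩))

lemma bot_inj {n : ℕ} {p p' : Dom} (hp : p ∈ Idx n) (hp' : p' ∈ Idx n)
    (h : bot p = bot p') : p = p' := by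
  have hii : p.1 = p'.1 := by
    by_contra hne
    have key : ∀ q q' : Dom, q ∈ Idx n → q' ∈ Idx n → q.1 < q'.1 → bot q = bot q' → False := by
      intro q q' hq hq' hlt hb
      have h2 := bot_block hq' q.1 hlt
      rw [← hb] at h2
      have hpos : 0 < (bot q ∩ Finset.Ico (3 * q.1) (3 * q.1 + 3)).card := by omega
      obtain ⟨x, hx⟩ := Finset.card_pos.mp hpos
      rw [Finset.mem_inter, Finset.mem_Ico] at hx
      have := bot_avoid hq x hx.1
      omega
    rcases Nat.lt_or_ge p.1 p'.1 with hlt | hge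
    · exact key p p' hp hp' hlt h
    · exact key p' p hp' hp (by omega) h.symm
  obtain ⟨hi, hj, hg, hS, hT, hTsub⟩ := mem_Idx_elim hp
  obtain ⟨hi', hj', hg', hS', hT', hTsub'⟩ := mem_Idx_elim hp'
  obtain ⟨i, j, ⟨S, c⟩, T⟩ := p
  obtain ⟨i2, j2, ⟨S2, c2⟩, T2⟩ := p'
  simp only at hii
  subst hii
  have hTT : T = T2 := by
    have := bot_filter_T hp
    have h2 := bot_filter_T hp'
    simp only at this h2 ⊢
    rw [← this, ← h2, h]
  have hbr : brem (⟨S, c⟩ : QT i) = brem (⟨S2, c2⟩ : QT i) := by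
    ext x
    have e1 := brem_iff hp x
    have e2 := brem_iff hp' x
    simp only at e1 e2 ⊢
    rw [e1, e2, h]
  have hSS : S = S2 := by
    ext l
    have e1 := mem_S_iff (⟨S, c⟩ : QT i) l
    have e2 := mem_S_iff (⟨S2, c2⟩ : QT i) l
    simp only at e1 e2
    rw [e1, e2, hbr]
  subst hSS
  have hjj : j = j2 := by
    simp only at hS hS'
    omega
  subst hjj
  have hcc : c = c2 := by
    funext l hl
    have hmem : 3 * (l : ℕ) + (c l hl : ℕ) ∈ brem (⟨S, c2⟩ : QT i) := by
      rw [← hbr]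
      exact Finset.mem_image.mpr ⟨⟨l, hl⟩, Finset.mem_attach _ _, rfl⟩
    simp only [brem, Finset.mem_image, Finset.mem_attach, true_and] at hmem
    obtain ⟨l', hl'⟩ := hmem
    have h1 := (c l hl).2
    have h2 := (c2 l'.1 l'.2).2
    have hval : (l'.1 : ℕ) = (l : ℕ) := by omega
    have hfin : l'.1 = l := Fin.ext hval
    have : c2 l hl = c2 l'.1 l'.2 := by
      subst hfin
      rfl
    rw [this]
    exact Fin.ext (by omega)
  subst hcc
  subst hTT
  rfl

/-- The key structural lemma: containments among the constructed sets are
exactly the within-copy order relations. -/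
lemma wst_sub_iff {n i i' : ℕ} {A A' : Finset ℕ}
    (hc : A.card = (n - 1) / 2) (hc' : A'.card = (n - 1) / 2)
    (hav : ∀ x ∈ A, x < 3 * i ∨ 3 * i + 3 ≤ x)
    (hav' : ∀ x ∈ A', x < 3 * i' ∨ 3 * i' + 3 ≤ x)
    (hbl : ∀ l, l < i → 2 ≤ (A ∩ Finset.Ico (3 * l) (3 * l + 3)).card)
    (hbl' : ∀ l, l < i' → 2 ≤ (A' ∩ Finset.Ico (3 * l) (3 * l + 3)).card)
    (w w' : WPoset) :
    wst i A w ⊆ wst i' A' w' ↔ (i = i' ∧ A = A' ∧ w ≤ w') := by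
  constructor
  · intro hsub
    -- first, i = i'
    have hii : i = i' := by
      rcases lt_trichotomy i i' with hlt | heq | hgt
      · exfalso
        have h2 : 2 ≤ (A' ∩ Finset.Ico (3 * i) (3 * i + 3)).card := hbl' i hlt
        have hAi : ∀ x ∈ A, ¬(3 * i ≤ x ∧ x < 3 * i + 3) := by
          intro x hx
          have := hav x hx
          omega
        rcases wcases w' with rfl | ⟨t', rfl⟩
        · -- X' = A'
          rcases wcases w with rfl | ⟨t, rfl⟩
          · have hAA : A = A' :=
              Finset.eq_of_subset_of_card_le hsub (by omega)
            subst hAA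
            obtain ⟨x, hx⟩ := Finset.card_pos.mp (by omega : 0 < (A ∩ Finset.Ico (3 * i) (3 * i + 3)).card)
            rw [Finset.mem_inter, Finset.mem_Ico] at hx
            exact hAi x hx.1 hx.2
          · have hbA : 3 * i + (t : ℕ) ∉ A := by
              intro hm
              have := hav _ hm
              have := t.2
              omega
            have hcard := Finset.card_le_card hsub
            change (insert (3 * i + (t : ℕ)) A).card ≤ A'.card at hcard
            rw [Finset.card_insert_of_notMem hbA] at hcard
            omega
        · -- X' = insert b' A'
          have hb' : 3 * i' + (t' : ℕ) ∉ A' := by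
            intro hm
            have := hav' _ hm
            have := t'.2
            omega
          rcases wcases w with rfl | ⟨t, rfl⟩
          · -- A ⊆ insert b' A'
            have hsub' : A ⊆ insert (3 * i' + (t' : ℕ)) A' := hsub
            have hsd : A' ∩ Finset.Ico (3 * i) (3 * i + 3) ⊆
                insert (3 * i' + (t' : ℕ)) A' \ A := by
              intro x hx
              rw [Finset.mem_inter, Finset.mem_Ico] at hx
              rw [Finset.mem_sdiff, Finset.mem_insert]
              refine ⟨Or.inr hx.1, fun hxA => hAi x hxA ⟨hx.2.1, hx.2.2⟩⟩
            have hcsd : (insert (3 * i' + (t' : ℕ)) A' \ A).card =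
                (insert (3 * i' + (t' : ℕ)) A').card - A.card :=
              Finset.card_sdiff_of_subset hsub'
            rw [Finset.card_insert_of_notMem hb'] at hcsd
            have := Finset.card_le_card hsd
            omega
          · -- insert b A ⊆ insert b' A', both of card m+1, so equal
            have hbA : 3 * i + (t : ℕ) ∉ A := by
              intro hm
              have := hav _ hm
              have := t.2
              omega
            have hsub' : insert (3 * i + (t : ℕ)) A ⊆ insert (3 * i' + (t' : ℕ)) A' := hsub
            have hEq : insert (3 * i + (t : ℕ)) A = insert (3 * i' + (t' : ℕ)) A' := by
              apply Finset.eq_of_subset_of_card_le hsub'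
              rw [Finset.card_insert_of_notMem hbA, Finset.card_insert_of_notMem hb']
              omega
            -- A' ∩ block i ⊆ {3i+t}
            have hsd : A' ∩ Finset.Ico (3 * i) (3 * i + 3) ⊆ {3 * i + (t : ℕ)} := by
              intro x hx
              rw [Finset.mem_inter, Finset.mem_Ico] at hx
              have hx1 : x ∈ insert (3 * i + (t : ℕ)) A := by
                rw [hEq, Finset.mem_insert]
                have ht' := t'.2
                right
                exact hx.1
              rw [Finset.mem_insert] at hx1
              rcases hx1 with rfl | hxA
              · exact Finset.mem_singleton_self _
              · exact absurd ⟨hx.2.1, hx.2.2⟩ (hAi x hxA)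
            have := Finset.card_le_card hsd
            rw [Finset.card_singleton] at this
            omega
      · exact heq
      · exfalso
        have h2 : 2 ≤ (A ∩ Finset.Ico (3 * i') (3 * i' + 3)).card := hbl i' hgt
        -- A ⊆ wst i A w
        have hAsub : A ⊆ wst i A w := by
          rcases wcases w with rfl | ⟨t, rfl⟩
          · exact Finset.Subset.refl _
          · exact Finset.subset_insert _ _
        have hmono : A ∩ Finset.Ico (3 * i') (3 * i' + 3) ⊆
            wst i' A' w' ∩ Finset.Ico (3 * i') (3 * i' + 3) :=
          Finset.inter_subset_inter (fun x hx => hsub (hAsub hx)) (Finset.Subset.refl _)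
        have hle1 : (wst i' A' w' ∩ Finset.Ico (3 * i') (3 * i' + 3)).card ≤ 1 := by
          apply Finset.card_le_one.mpr
          intro a ha b hb
          rw [Finset.mem_inter, Finset.mem_Ico] at ha hb
          rcases wcases w' with rfl | ⟨t', rfl⟩
          · exfalso
            have := hav' a ha.1
            omega
          · have ha1 : a ∈ insert (3 * i' + (t' : ℕ)) A' := ha.1
            have hb1 : b ∈ insert (3 * i' + (t' : ℕ)) A' := hb.1
            rw [Finset.mem_insert] at ha1 hb1
            rcases ha1 with rfl | haA
            · rcases hb1 with rfl | hbA
              · rfl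
              · exfalso; have := hav' b hbA; omega
            · exfalso; have := hav' a haA; omega
        have := Finset.card_le_card hmono
        omega
    subst hii
    -- now same i; conclude A = A' and w ≤ w'
    rcases wcases w' with rfl | ⟨t', rfl⟩
    · rcases wcases w with rfl | ⟨t, rfl⟩
      · have hAA : A = A' := Finset.eq_of_subset_of_card_le hsub (by omega)
        exact ⟨rfl, hAA, Or.inl rfl⟩
      · exfalso
        have hbA : 3 * i + (t : ℕ) ∉ A := by
          intro hm
          have := hav _ hm
          have := t.2
          omega
        have hcard := Finset.card_le_card hsub
        change (insert (3 * i + (t : ℕ)) A).card ≤ A'.card at hcard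
        rw [Finset.card_insert_of_notMem hbA] at hcard
        omega
    · rcases wcases w with rfl | ⟨t, rfl⟩
      · -- A ⊆ insert b' A'
        have hsubA : A ⊆ A' := by
          intro x hx
          have hx' : x ∈ insert (3 * i + (t' : ℕ)) A' := hsub hx
          rw [Finset.mem_insert] at hx'
          rcases hx' with rfl | h
          · exfalso
            have := hav _ hx
            have := t'.2
            omega
          · exact h
        have hAA : A = A' := Finset.eq_of_subset_of_card_le hsubA (by omega)
        exact ⟨rfl, hAA, Or.inl rfl⟩
      · -- insert b A ⊆ insert b' A'
        have hbb : 3 * i + (t : ℕ) = 3 * i + (t' : ℕ) := by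
          have hm : (3 * i + (t : ℕ)) ∈ insert (3 * i + (t' : ℕ)) A' :=
            hsub (Finset.mem_insert_self _ _)
          rw [Finset.mem_insert] at hm
          rcases hm with h | h
          · exact h
          · exfalso
            have := hav' _ h
            have := t.2
            omega
        have htt : t = t' := Fin.ext (by omega)
        have hsubA : A ⊆ A' := by
          intro x hx
          have hx' : x ∈ insert (3 * i + (t' : ℕ)) A' :=
            hsub (Finset.mem_insert_of_mem hx)
          rw [Finset.mem_insert] at hx'
          rcases hx' with rfl | h
          · exfalso
            have := hav _ hx
            have := t'.2
            omega
          · exact h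
        have hAA : A = A' := Finset.eq_of_subset_of_card_le hsubA (by omega)
        exact ⟨rfl, hAA, Or.inr (by rw [htt])⟩
  · rintro ⟨rfl, rfl, hw⟩
    rcases (wle_iff w w').mp hw with rfl | rfl
    · rcases wcases w' with rfl | ⟨t', rfl⟩
      · exact Finset.Subset.refl _
      · exact Finset.subset_insert _ _
    · exact Finset.Subset.refl _

lemma wst_lt_n {n : ℕ} {p : Dom} (hp : p ∈ Idx n) (w : WPoset) :
    ∀ x ∈ wst p.1 (bot p) w, x < n := by
  intro x hx
  have h3 := i_bound (mem_Idx_elim hp).1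
  rcases wcases w with rfl | ⟨t, rfl⟩
  · exact bot_lt_n hp x hx
  · change x ∈ insert (3 * p.1 + (t : ℕ)) (bot p) at hx
    rw [Finset.mem_insert] at hx
    rcases hx with rfl | hx
    · have := t.2
      omega
    · exact bot_lt_n hp x hx

end Sp18

/-- Lower estimate: for `n ≥ 3` with `n ∉ {3,5,7}`,
`Sp(W,n) ≥ Σ_{i=0}^{⌊n/3⌋−1} Σ_{j=0}^{i} 3^j C(i,j) C(n−3i−3, ⌊(n−1)/2⌋+j−3i)`,
where binomial coefficients with negative lower index are `0` (expressed by the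
guard `3*i ≤ (n−1)/2 + j`). -/
theorem stmt_18 (n : ℕ) (hn : 3 ≤ n) (h3 : n ≠ 3) (h5 : n ≠ 5) (h7 : n ≠ 7) :
    (∑ i ∈ Finset.range (n / 3), ∑ j ∈ Finset.range (i + 1),
        if 3 * i ≤ (n - 1) / 2 + j then
          3 ^ j * i.choose j * (n - 3 * i - 3).choose ((n - 1) / 2 + j - 3 * i)
        else 0)
      ≤ sSup {k : ℕ | Nonempty ((Σ _ : Fin k, WPoset) ↪o Set (Fin n))} := by
  classical
  rw [← Sp18.card_Idx n]
  set K := (Sp18.Idx n).card with hK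
  -- the embedding
  have hmem : K ∈ {k : ℕ | Nonempty ((Σ _ : Fin k, WPoset) ↪o Set (Fin n))} := by
    have e : Fin K ≃ {x // x ∈ Sp18.Idx n} := (Fintype.equivFinOfCardEq (by
      rw [Fintype.card_coe])).symm
    refine ⟨OrderEmbedding.ofMapLEIff
      (fun x => {v : Fin n | (v : ℕ) ∈ Sp18.wst (e x.1).1.1 (Sp18.bot (e x.1).1) x.2}) ?_⟩
    rintro ⟨k, w⟩ ⟨k', w'⟩
    obtain ⟨hi1, -, -, -, -, -⟩ := Sp18.mem_Idx_elim (e k).2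
    obtain ⟨hi1', -, -, -, -, -⟩ := Sp18.mem_Idx_elim (e k').2
    have hiff := Sp18.wst_sub_iff (n := n)
      (Sp18.bot_card (e k).2) (Sp18.bot_card (e k').2)
      (Sp18.bot_avoid (e k).2) (Sp18.bot_avoid (e k').2)
      (Sp18.bot_block (e k).2) (Sp18.bot_block (e k').2) w w'
    constructor
    · intro hle
      have hfin : Sp18.wst (e k).1.1 (Sp18.bot (e k).1) w ⊆
          Sp18.wst (e k').1.1 (Sp18.bot (e k').1) w' := by
        intro x hx
        have hxn : x < n := Sp18.wst_lt_n (e k).2 w x hx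
        have : (⟨x, hxn⟩ : Fin n) ∈
            {v : Fin n | (v : ℕ) ∈ Sp18.wst (e k).1.1 (Sp18.bot (e k).1) w} := hx
        exact hle this
      obtain ⟨hii, hAA, hww⟩ := hiff.mp hfin
      have hpp : (e k) = (e k') :=
        Subtype.ext (Sp18.bot_inj (e k).2 (e k').2 hAA)
      have hkk : k = k' := e.injective hpp
      subst hkk
      exact Sigma.mk_le_mk_iff.mpr hww
    · intro hab
      obtain ⟨heq, hww⟩ := Sigma.le_def.mp hab
      simp only at heq
      subst heq
      simp only at hww
      have hfin := hiff.mpr ⟨rfl, rfl, hww⟩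
      intro v hv
      exact hfin hv
  -- boundedness
  have hbdd : BddAbove {k : ℕ | Nonempty ((Σ _ : Fin k, WPoset) ↪o Set (Fin n))} := by
    refine ⟨Fintype.card (Set (Fin n)), fun k hk => ?_⟩
    obtain ⟨f⟩ := hk
    have hinj : Function.Injective (fun x : Fin k => f ⟨x, (none : Option (Fin 3))⟩) := by
      intro a b hab
      have := f.injective hab
      exact congrArg Sigma.fst this
    have := Fintype.card_le_of_injective _ hinj
    rwa [Fintype.card_fin] at this
  exact le_csSup hbdd hmem
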